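/- Suppose z_1, ..., z_N are pairwise distinct complex numbers, Γ_1, ..., Γ_N are real vorticities, z_0 and Λ are complex numbers with Im(Λ) ≠ 0, and V_n = Λ(z_n − z_0) for every n, where V_n = Σ_{j≠n} Γ_j / conj(z_n − z_j). Then L = 0 and S = Σ_{1≤j<k≤N} Γ_j Γ_k |z_k − z_j|² = 0. -/

import Mathlib

open Finset Complex

lemma symHelp {N : ℕ} (f : Fin N → Fin N → ℂ) :
    (∑ j, ∑ k, if j ≠ k then f j k else 0)
      = ∑ j, ∑ k, if j < k then f j k + f k j else 0 := by
  have h1 : ∀ j k : Fin N, (if j ≠ k then f j k else 0)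
      = (if j < k then f j k else 0) + (if k < j then f j k else 0) := by
    intro j k
    rcases lt_trichotomy j k with h | h | h
    · simp [h, h.ne, asymm h]
    · simp [h]
    · simp [h, h.ne', asymm h]
  have h2 : ∀ j k : Fin N, (if j < k then f j k + f k j else 0)
      = (if j < k then f j k else 0) + (if j < k then f k j else 0) := by
    intro j k; split <;> simp
  simp_rw [h1, h2, Finset.sum_add_distrib]
  congr 1
  rw [Finset.sum_comm]

lemma neSum {N : ℕ} (f : Fin N → Fin N → ℂ) :
    (∑ j, ∑ k, if j ≠ k then f j k else 0) = (∑ j, ∑ k, f j k) - ∑ j, f j j := by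
  have h1 : ∀ j k : Fin N, (if j ≠ k then f j k else 0)
      = f j k - (if k = j then f j k else 0) := by
    intro j k
    rcases eq_or_ne j k with h | h
    · subst h; simp
    · simp [h, Ne.symm h]
  simp_rw [h1, Finset.sum_sub_distrib, Finset.sum_ite_eq', Finset.mem_univ, if_true]

theorem collapse_config_L_and_S_zero (N : ℕ) (Γ : Fin N → ℝ) (z : Fin N → ℂ)
    (hz : Function.Injective z) (Λ z₀ : ℂ) (hΛ : Λ.im ≠ 0)
    (hcc : ∀ n, (∑ j ∈ univ.filter (· ≠ n),
      (Γ j : ℂ) / (starRingEnd ℂ) (z n - z j)) = Λ * (z n - z₀)) :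
    (∑ j, ∑ k, if j < k then Γ j * Γ k else 0) = 0 ∧
    (∑ j, ∑ k, if j < k then Γ j * Γ k * ‖z k - z j‖ ^ 2 else 0) = 0 := by
  classical
  set c : Fin N → ℂ := fun n => (Γ n : ℂ) with hc
  set w : Fin N → ℂ := fun n => z n - z₀ with hw
  have hΛ0 : Λ ≠ 0 := fun h => hΛ (by simp [h])
  -- conjugated collapse equation
  have hcc' : ∀ n, (∑ j ∈ univ.filter (· ≠ n), c j / (z n - z j))
      = (starRingEnd ℂ) Λ * (starRingEnd ℂ) (w n) := by
    intro n
    have h := congrArg (starRingEnd ℂ) (hcc n)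
    simpa [map_sum, map_div₀, Complex.conj_ofReal, hc, hw] using h
  -- row sums
  have hrow : ∀ n, (∑ j, if n ≠ j then c n * c j / (starRingEnd ℂ) (z n - z j) else 0)
      = c n * (Λ * w n) := by
    intro n
    have e : ∀ j : Fin N, (if n ≠ j then c n * c j / (starRingEnd ℂ) (z n - z j) else 0)
        = c n * (if j ≠ n then c j / (starRingEnd ℂ) (z n - z j) else 0) := by
      intro j
      rcases eq_or_ne n j with h | h
      · simp [h]
      · simp only [if_pos h, if_pos (Ne.symm h)]; ring
    simp_rw [e, ← Finset.mul_sum, ← Finset.sum_filter]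
    convert congrArg (fun x => c n * x) (hcc n)
  have hrow2 : ∀ n, (∑ j, if n ≠ j then c n * c j * (w n / (z n - z j)) else 0)
      = c n * (w n * ((starRingEnd ℂ) Λ * (starRingEnd ℂ) (w n))) := by
    intro n
    have e : ∀ j : Fin N, (if n ≠ j then c n * c j * (w n / (z n - z j)) else 0)
        = c n * w n * (if j ≠ n then c j / (z n - z j) else 0) := by
      intro j
      rcases eq_or_ne n j with h | h
      · simp [h]
      · simp only [if_pos h, if_pos (Ne.symm h)]; ring
    simp_rw [e, ← Finset.mul_sum, ← Finset.sum_filter, hcc' n]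
    ring
  -- total momentum vanishes
  have hW : (∑ n, c n * w n) = 0 := by
    have h0 : (∑ n, ∑ j, if n ≠ j then c n * c j / (starRingEnd ℂ) (z n - z j) else 0) = 0 := by
      rw [symHelp (fun n j => c n * c j / (starRingEnd ℂ) (z n - z j))]
      refine Finset.sum_eq_zero fun j _ => Finset.sum_eq_zero fun k _ => ?_
      split
      · rw [show z k - z j = -(z j - z k) by ring, map_neg, div_neg]; ring
      · rfl
    have h2 : (∑ n, ∑ j, if n ≠ j then c n * c j / (starRingEnd ℂ) (z n - z j) else 0)
        = Λ * ∑ n, c n * w n := by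
      simp_rw [hrow, Finset.mul_sum]
      exact Finset.sum_congr rfl fun n _ => by ring
    rcases mul_eq_zero.mp (h2.symm.trans h0) with h | h
    · exact absurd h hΛ0
    · exact h
  -- L = conj Λ * T
  set T := ∑ n, c n * (w n * (starRingEnd ℂ) (w n)) with hT
  have Lc : (∑ j, ∑ k, if j < k then c j * c k else 0) = (starRingEnd ℂ) Λ * T := by
    have h2 : (∑ n, ∑ j, if n ≠ j then c n * c j * (w n / (z n - z j)) else 0)
        = (starRingEnd ℂ) Λ * T := by
      simp_rw [hrow2, hT, Finset.mul_sum]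
      exact Finset.sum_congr rfl fun n _ => by ring
    rw [← h2, symHelp (fun n j => c n * c j * (w n / (z n - z j)))]
    refine Finset.sum_congr rfl fun j _ => Finset.sum_congr rfl fun k _ => ?_
    split
    · next h =>
      have hd : z j - z k ≠ 0 := sub_ne_zero.mpr fun e => (ne_of_lt h) (hz e)
      have hwd : w j - w k = z j - z k := by simp only [hw]; ring
      rw [show z k - z j = -(z j - z k) by ring, div_neg]
      field_simp
      linear_combination (c j * c k) * hwd
    · rfl
  set t := ∑ n, Γ n * Complex.normSq (w n) with ht
  have hTr : T = (t : ℂ) := by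
    rw [hT, ht]
    push_cast
    exact Finset.sum_congr rfl fun n _ => by rw [Complex.mul_conj]
  have hLc : (∑ j, ∑ k, if j < k then c j * c k else 0)
      = ((∑ j, ∑ k, if j < k then Γ j * Γ k else 0 : ℝ) : ℂ) := by
    push_cast [apply_ite (Complex.ofReal)]
    rfl
  have key : ((∑ j, ∑ k, if j < k then Γ j * Γ k else 0 : ℝ) : ℂ)
      = (starRingEnd ℂ) Λ * (t : ℂ) := by rw [← hLc, Lc, hTr]
  have ht0 : t = 0 := by
    have him := congrArg Complex.im key
    simp [Complex.mul_im] at him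
    rcases him with h | h
    · exact absurd h hΛ
    · exact h
  have hL : (∑ j, ∑ k, if j < k then Γ j * Γ k else 0) = 0 := by
    have hzero : ((∑ j, ∑ k, if j < k then Γ j * Γ k else 0 : ℝ) : ℂ) = 0 := by
      rw [key, ht0]; simp
    exact_mod_cast hzero
  have hT0 : T = 0 := by rw [hTr, ht0]; simp
  -- S part
  have hSc : (∑ j, ∑ k, if j < k then c j * c k * ((w k - w j) * (starRingEnd ℂ) (w k - w j)) else 0) = 0 := by
    have h1 : (∑ j, ∑ k, if j < k then c j * c k * ((w k - w j) * (starRingEnd ℂ) (w k - w j)) else 0)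
        = ∑ j, ∑ k, if j ≠ k then
            (c j * c k * (w k * (starRingEnd ℂ) (w k)) - (c j * w j) * (c k * (starRingEnd ℂ) (w k))) else 0 := by
      rw [symHelp (fun j k => c j * c k * (w k * (starRingEnd ℂ) (w k)) - (c j * w j) * (c k * (starRingEnd ℂ) (w k)))]
      refine Finset.sum_congr rfl fun j _ => Finset.sum_congr rfl fun k _ => ?_
      split
      · rw [map_sub]; ring
      · rfl
    have h2 : (∑ j, ∑ k, (c j * c k * (w k * (starRingEnd ℂ) (w k)) - (c j * w j) * (c k * (starRingEnd ℂ) (w k))))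
        = (∑ j, c j) * T - (∑ n, c n * w n) * (∑ n, c n * (starRingEnd ℂ) (w n)) := by
      rw [hT, Finset.sum_mul_sum, Finset.sum_mul_sum, ← Finset.sum_sub_distrib]
      refine Finset.sum_congr rfl fun j _ => ?_
      rw [← Finset.sum_sub_distrib]
      exact Finset.sum_congr rfl fun k _ => by ring
    have hdiag : (∑ j, (c j * c j * (w j * (starRingEnd ℂ) (w j)) - (c j * w j) * (c j * (starRingEnd ℂ) (w j)))) = 0 :=
      Finset.sum_eq_zero fun j _ => by ring
    rw [h1, neSum, h2, hdiag, hT0, hW]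
    simp
  refine ⟨hL, ?_⟩
  have hcast : ((∑ j, ∑ k, if j < k then Γ j * Γ k * ‖z k - z j‖ ^ 2 else 0 : ℝ) : ℂ)
      = ∑ j, ∑ k, if j < k then c j * c k * ((w k - w j) * (starRingEnd ℂ) (w k - w j)) else 0 := by
    push_cast [apply_ite (Complex.ofReal)]
    refine Finset.sum_congr rfl fun j _ => Finset.sum_congr rfl fun k _ => ?_
    split
    · have hwd : w k - w j = z k - z j := by simp only [hw]; ring
      have hwd : w k - w j = z k - z j := by simp only [hw]; ring
      rw [hwd, Complex.mul_conj, ← Complex.ofReal_pow, Complex.sq_norm]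
    · rfl
  have : ((∑ j, ∑ k, if j < k then Γ j * Γ k * ‖z k - z j‖ ^ 2 else 0 : ℝ) : ℂ) = 0 :=
    hcast.trans hSc
  exact_mod_cast this
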